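/- (Soundness of the pivot-based spatial filter) Let P, Q and T be trajectories in V, and s and t time intervals with |s| > 0, |t| > 0, t ⊆ I(P) and I(Q) = s ⊆ t. Then |Dist(Q,P,t) − Dist(T,P,t)| ≤ 1 − |s|/|t| + (|s|/|t|) · Dist(Q,T,s). In particular, for any threshold r ≥ 0, if |Dist(Q,P,t) − Dist(T,P,t)| > 1 − |s|/|t| + (|s|/|t|) · r, then Dist(Q,T,s) > r. -/

import Mathlib

open MeasureTheory

/-- A trajectory in `V`: a nonempty list of (vertex, interval start, interval end) triples,
with integer endpoints `a < b`, consecutive intervals sharing endpoints, and consecutive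
vertices distinct. -/
structure Traj (V : Type*) where
  steps : List (V × ℤ × ℤ)
  nonempty : steps ≠ []
  valid : ∀ p ∈ steps, p.2.1 < p.2.2
  chain : steps.Chain' (fun p q => p.2.2 = q.2.1 ∧ p.1 ≠ q.1)

/-- Length (Lebesgue measure) of a set of times. -/
noncomputable def ilen (A : Set ℝ) : ℝ := (volume A).toReal

/-- The time interval of a single trajectory step. -/
def stepInt {V : Type*} (p : V × ℤ × ℤ) : Set ℝ := Set.Icc (p.2.1 : ℝ) (p.2.2 : ℝ)

/-- The total interval `I(T)` of a trajectory: from its starting time to its ending time. -/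
noncomputable def totalInt {V : Type*} (T : Traj V) : Set ℝ :=
  Set.Icc (((T.steps.head T.nonempty).2.1 : ℝ)) (((T.steps.getLast T.nonempty).2.2 : ℝ))

/-- The spatio-temporal similarity `Sim(Q,T,s)`. -/
noncomputable def Sim {V : Type*} [MetricSpace V] (Q T : Traj V) (s : Set ℝ) : ℝ :=
  (1 / ilen s) *
    (Q.steps.map (fun q =>
      (T.steps.map (fun p =>
        ilen (s ∩ stepInt p ∩ stepInt q) * Real.exp (-(dist p.1 q.1)))).sum)).sum

/-- The spatio-temporal distance `Dist(Q,T,s) = 1 - Sim(Q,T,s)`. -/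
noncomputable def TrajDist {V : Type*} [MetricSpace V] (Q T : Traj V) (s : Set ℝ) : ℝ :=
  1 - Sim Q T s

open Set

/- ### measure helpers -/

lemma ilen_nonneg (A : Set ℝ) : 0 ≤ ilen A := ENNReal.toReal_nonneg

lemma vfin {A B : Set ℝ} (h : A ⊆ B) (hB : volume B ≠ ⊤) : volume A ≠ ⊤ :=
  fun ht => hB (top_le_iff.mp (ht ▸ measure_mono h))

lemma vfin_Icc {A : Set ℝ} {x y : ℝ} (h : A ⊆ Icc x y) : volume A ≠ ⊤ :=
  vfin h (by simp [Real.volume_Icc])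

lemma ilen_mono {A B : Set ℝ} (h : A ⊆ B) (hB : volume B ≠ ⊤) : ilen A ≤ ilen B :=
  ENNReal.toReal_mono hB (measure_mono h)

lemma ilen_Icc {x y : ℝ} (h : x ≤ y) : ilen (Icc x y) = y - x := by
  simp [ilen, Real.volume_Icc, ENNReal.toReal_ofReal (by linarith : (0:ℝ) ≤ y - x)]

lemma ilen_inter_add_diff (A : Set ℝ) {I : Set ℝ} (hI : MeasurableSet I) (hA : volume A ≠ ⊤) :
    ilen A = ilen (A ∩ I) + ilen (A \ I) := by
  have h := measure_inter_add_diff (μ := volume) A hI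
  unfold ilen
  rw [← h, ENNReal.toReal_add (vfin Set.inter_subset_left hA) (vfin Set.diff_subset hA)]

lemma vol_inter_Ioc (A : Set ℝ) (y z : ℝ) : volume (A ∩ Ioc y z) = volume (A ∩ Icc y z) := by
  apply le_antisymm (measure_mono (inter_subset_inter_right A Ioc_subset_Icc_self))
  calc volume (A ∩ Icc y z) ≤ volume ((A ∩ Ioc y z) ∪ {y}) := by
        apply measure_mono; intro x hx
        rcases eq_or_ne x y with rfl | hne
        · exact Or.inr rfl
        · exact Or.inl ⟨hx.1, ⟨lt_of_le_of_ne hx.2.1 (Ne.symm hne), hx.2.2⟩⟩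
    _ ≤ volume (A ∩ Ioc y z) + volume ({y} : Set ℝ) := measure_union_le _ _
    _ = volume (A ∩ Ioc y z) := by simp

lemma ilen_split (A : Set ℝ) {x y z : ℝ} (hxy : x ≤ y) (hyz : y ≤ z) :
    ilen (A ∩ Icc x z) = ilen (A ∩ Icc x y) + ilen (A ∩ Icc y z) := by
  have hm : volume (A ∩ Icc x z) = volume (A ∩ Icc x z ∩ Icc x y) + volume ((A ∩ Icc x z) \ Icc x y) :=
    (measure_inter_add_diff (μ := volume) _ measurableSet_Icc).symm
  have h1 : A ∩ Icc x z ∩ Icc x y = A ∩ Icc x y := by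
    rw [inter_assoc, inter_eq_right.mpr (Icc_subset_Icc le_rfl hyz)]
  have h2 : (A ∩ Icc x z) \ Icc x y = A ∩ Ioc y z := by
    ext t; simp only [mem_diff, mem_inter_iff, mem_Icc, mem_Ioc, not_and, not_le]
    constructor
    · rintro ⟨⟨hA, h3, h4⟩, h5⟩; exact ⟨hA, h5 h3, h4⟩
    · rintro ⟨hA, h3, h4⟩; exact ⟨⟨hA, le_trans hxy h3.le, h4⟩, fun _ => h3⟩
  rw [h1, h2, vol_inter_Ioc] at hm
  unfold ilen
  rw [hm, ENNReal.toReal_add (vfin_Icc inter_subset_right) (vfin_Icc inter_subset_right)]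

lemma ilen_split3 {x y z u : ℝ} (h1 : x ≤ y) (h2 : y ≤ z) (h3 : z ≤ u) (B : Set ℝ) :
    ilen (Icc x u ∩ B) = ilen (Icc x y ∩ B) + ilen (Icc y z ∩ B) + ilen (Icc z u ∩ B) := by
  rw [inter_comm (Icc x u), inter_comm (Icc x y), inter_comm (Icc y z), inter_comm (Icc z u),
    ilen_split B h1 (h2.trans h3), ilen_split B h2 h3, add_assoc]

/- ### chain covering -/

section Lists
variable {V : Type*}

lemma head_le_getLast : ∀ (l : List (V × ℤ × ℤ)) (h : l ≠ []),
    (∀ p ∈ l, p.2.1 < p.2.2) → l.Chain' (fun p q => p.2.2 = q.2.1 ∧ p.1 ≠ q.1) →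
    (l.head h).2.1 ≤ (l.getLast h).2.2
  | [], h, _, _ => absurd rfl h
  | [p], _, hv, _ => (hv p (List.mem_singleton_self p)).le
  | p :: q :: l, _, hv, hc => by
    have hc' := List.isChain_cons_cons.mp hc
    have ih := head_le_getLast (q :: l) (List.cons_ne_nil _ _)
      (fun r hr => hv r (List.mem_cons_of_mem p hr)) hc'.2
    have h1 : p.2.1 ≤ p.2.2 := (hv p (by simp)).le
    rw [List.getLast_cons (List.cons_ne_nil _ _)]
    simp only [List.head_cons] at ih ⊢
    have h2 : p.2.2 = q.2.1 := hc'.1.1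
    omega

lemma sum_ilen_list (A : Set ℝ) : ∀ (l : List (V × ℤ × ℤ)) (h : l ≠ []),
    (∀ p ∈ l, p.2.1 < p.2.2) → l.Chain' (fun p q => p.2.2 = q.2.1 ∧ p.1 ≠ q.1) →
    (l.map (fun p => ilen (A ∩ stepInt p))).sum
      = ilen (A ∩ Set.Icc (((l.head h).2.1 : ℝ)) (((l.getLast h).2.2 : ℝ)))
  | [], h, _, _ => absurd rfl h
  | [p], _, hv, _ => by simp [stepInt]
  | p :: q :: l, _, hv, hc => by
    have hc' := List.isChain_cons_cons.mp hc
    have ih := sum_ilen_list A (q :: l) (List.cons_ne_nil _ _)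
      (fun r hr => hv r (List.mem_cons_of_mem p hr)) hc'.2
    have hmono := head_le_getLast (q :: l) (List.cons_ne_nil _ _)
      (fun r hr => hv r (List.mem_cons_of_mem p hr)) hc'.2
    have h1 : p.2.1 ≤ p.2.2 := (hv p (by simp)).le
    have h2 : p.2.2 = q.2.1 := hc'.1.1
    simp only [List.head_cons] at hmono ih ⊢
    rw [List.getLast_cons (List.cons_ne_nil _ _)]
    rw [List.map_cons, List.sum_cons, ih]
    have hx : ((p.2.1 : ℝ)) ≤ ((p.2.2 : ℝ)) := by exact_mod_cast h1
    have hy : ((p.2.2 : ℝ)) ≤ (((q :: l).getLast (List.cons_ne_nil _ _)).2.2 : ℝ) := by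
      rw [h2]; exact_mod_cast hmono
    rw [ilen_split A hx hy]
    have : ((q.2.1 : ℝ)) = ((p.2.2 : ℝ)) := by exact_mod_cast h2.symm
    rw [this]
    rfl

lemma sum_ilen_steps (T : Traj V) (A : Set ℝ) :
    (T.steps.map (fun p => ilen (A ∩ stepInt p))).sum = ilen (A ∩ totalInt T) :=
  sum_ilen_list A T.steps T.nonempty T.valid T.chain

lemma measurableSet_totalInt (T : Traj V) : MeasurableSet (totalInt T) := measurableSet_Icc

end Lists

/- ### list sum machinery -/

section Sums
variable {α β γ : Type*}

lemma lsum_add (l : List α) (f g : α → ℝ) :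
    (l.map (fun a => f a + g a)).sum = (l.map f).sum + (l.map g).sum := by
  induction l with
  | nil => simp
  | cons a l ih => simp [ih]; ring

lemma lsum_mono {l : List α} {f g : α → ℝ} (h : ∀ a ∈ l, f a ≤ g a) :
    (l.map f).sum ≤ (l.map g).sum := by
  induction l with
  | nil => simp
  | cons a l ih =>
    simp only [List.map_cons, List.sum_cons]
    exact add_le_add (h a (by simp)) (ih fun a ha => h a (by simp [ha]))

lemma lsum_congr {l : List α} {f g : α → ℝ} (h : ∀ a ∈ l, f a = g a) :
    (l.map f).sum = (l.map g).sum :=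
  le_antisymm (lsum_mono fun a ha => (h a ha).le) (lsum_mono fun a ha => (h a ha).ge)

lemma lsum_nonneg {l : List α} {f : α → ℝ} (h : ∀ a ∈ l, 0 ≤ f a) : 0 ≤ (l.map f).sum := by
  have := lsum_mono (l := l) (f := fun _ => (0:ℝ)) h
  simpa using this

lemma lsum_mul_right (l : List α) (f : α → ℝ) (c : ℝ) :
    (l.map (fun a => f a * c)).sum = (l.map f).sum * c := by
  induction l with
  | nil => simp
  | cons a l ih => simp [ih]; ring

def sum2 (l₁ : List α) (l₂ : List β) (f : α → β → ℝ) : ℝ :=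
  (l₁.map (fun a => (l₂.map (fun b => f a b)).sum)).sum

def sum3 (l₁ : List α) (l₂ : List β) (l₃ : List γ) (f : α → β → γ → ℝ) : ℝ :=
  (l₁.map (fun a => (l₂.map (fun b => (l₃.map (fun c => f a b c)).sum)).sum)).sum

lemma sum2_comm (l₁ : List α) (l₂ : List β) (f : α → β → ℝ) :
    sum2 l₁ l₂ f = sum2 l₂ l₁ (fun b a => f a b) := by
  unfold sum2
  induction l₁ with
  | nil => simp
  | cons a l ih =>
    simp only [List.map_cons, List.sum_cons, ih, ← lsum_add]

lemma sum2_mono {l₁ : List α} {l₂ : List β} {f g : α → β → ℝ}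
    (h : ∀ a ∈ l₁, ∀ b ∈ l₂, f a b ≤ g a b) : sum2 l₁ l₂ f ≤ sum2 l₁ l₂ g :=
  lsum_mono fun a ha => lsum_mono fun b hb => h a ha b hb

lemma sum2_congr {l₁ : List α} {l₂ : List β} {f g : α → β → ℝ}
    (h : ∀ a ∈ l₁, ∀ b ∈ l₂, f a b = g a b) : sum2 l₁ l₂ f = sum2 l₁ l₂ g :=
  lsum_congr fun a ha => lsum_congr fun b hb => h a ha b hb

lemma sum2_add (l₁ : List α) (l₂ : List β) (f g : α → β → ℝ) :
    sum2 l₁ l₂ (fun a b => f a b + g a b) = sum2 l₁ l₂ f + sum2 l₁ l₂ g := by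
  unfold sum2
  rw [← lsum_add]
  exact lsum_congr fun a _ => lsum_add _ _ _

lemma sum2_sub (l₁ : List α) (l₂ : List β) (f g : α → β → ℝ) :
    sum2 l₁ l₂ (fun a b => f a b - g a b) = sum2 l₁ l₂ f - sum2 l₁ l₂ g := by
  have h := sum2_add l₁ l₂ (fun a b => f a b - g a b) g
  have h2 : sum2 l₁ l₂ (fun a b => (f a b - g a b) + g a b) = sum2 l₁ l₂ f :=
    sum2_congr fun a _ b _ => by ring
  rw [h2] at h
  linarith

lemma sum3_eq (l₁ : List α) (l₂ : List β) (l₃ : List γ) (f : α → β → γ → ℝ) :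
    sum3 l₁ l₂ l₃ f = sum2 l₁ l₂ (fun a b => (l₃.map (fun c => f a b c)).sum) := rfl

lemma sum3_mono {l₁ : List α} {l₂ : List β} {l₃ : List γ} {f g : α → β → γ → ℝ}
    (h : ∀ a ∈ l₁, ∀ b ∈ l₂, ∀ c ∈ l₃, f a b c ≤ g a b c) : sum3 l₁ l₂ l₃ f ≤ sum3 l₁ l₂ l₃ g :=
  lsum_mono fun a ha => lsum_mono fun b hb => lsum_mono fun c hc => h a ha b hb c hc

lemma sum3_congr {l₁ : List α} {l₂ : List β} {l₃ : List γ} {f g : α → β → γ → ℝ}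
    (h : ∀ a ∈ l₁, ∀ b ∈ l₂, ∀ c ∈ l₃, f a b c = g a b c) : sum3 l₁ l₂ l₃ f = sum3 l₁ l₂ l₃ g :=
  lsum_congr fun a ha => lsum_congr fun b hb => lsum_congr fun c hc => h a ha b hb c hc

lemma sum3_add (l₁ : List α) (l₂ : List β) (l₃ : List γ) (f g : α → β → γ → ℝ) :
    sum3 l₁ l₂ l₃ (fun a b c => f a b c + g a b c) = sum3 l₁ l₂ l₃ f + sum3 l₁ l₂ l₃ g := by
  rw [sum3_eq, sum3_eq, sum3_eq, ← sum2_add]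
  exact sum2_congr fun a _ b _ => lsum_add _ _ _

lemma sum3_swap12 (l₁ : List α) (l₂ : List β) (l₃ : List γ) (f : α → β → γ → ℝ) :
    sum3 l₁ l₂ l₃ f = sum3 l₂ l₁ l₃ (fun b a c => f a b c) := by
  rw [sum3_eq, sum3_eq, sum2_comm]

lemma sum3_swap23 (l₁ : List α) (l₂ : List β) (l₃ : List γ) (f : α → β → γ → ℝ) :
    sum3 l₁ l₂ l₃ f = sum3 l₁ l₃ l₂ (fun a c b => f a b c) := by
  unfold sum3
  exact lsum_congr fun a _ => sum2_comm l₂ l₃ (fun b c => f a b c)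

end Sums

/- ### exp triangle -/

lemma exp_tri {x y z : ℝ} (h : x - y ≤ z) (hz0 : 0 ≤ z) (hy0 : 0 ≤ y) :
    Real.exp (-z) ≤ Real.exp (-x) + 1 - Real.exp (-y) := by
  rcases le_or_gt x y with hxy | hxy
  · have h1 : Real.exp (-z) ≤ 1 := Real.exp_le_one_iff.mpr (by linarith)
    have h2 : Real.exp (-y) ≤ Real.exp (-x) := Real.exp_le_exp.mpr (by linarith)
    linarith
  · have h1 : Real.exp (-z) ≤ Real.exp (y - x) := Real.exp_le_exp.mpr (by linarith)
    have h2 : Real.exp (-x) ≤ Real.exp (-y) := Real.exp_le_exp.mpr (by linarith)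
    have h3 : (1:ℝ) ≤ Real.exp y := Real.one_le_exp hy0
    have h4 : Real.exp (y - x) = Real.exp (-x) * Real.exp y := by
      rw [← Real.exp_add]; ring_nf
    have h5 : Real.exp (-y) * Real.exp y = 1 := by
      rw [← Real.exp_add]; simp
    nlinarith [Real.exp_pos y, Real.exp_pos (-x), Real.exp_pos (-y)]

/- ### WW : unnormalized similarity -/

noncomputable def WW {V : Type*} [MetricSpace V] (X Y : Traj V) (A : Set ℝ) : ℝ :=
  sum2 X.steps Y.steps (fun q p => ilen (A ∩ stepInt p ∩ stepInt q) * Real.exp (-(dist p.1 q.1)))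

lemma Sim_eq {V : Type*} [MetricSpace V] (X Y : Traj V) (A : Set ℝ) :
    Sim X Y A = (1 / ilen A) * WW X Y A := rfl

lemma WW_nonneg {V : Type*} [MetricSpace V] (X Y : Traj V) (A : Set ℝ) : 0 ≤ WW X Y A :=
  lsum_nonneg fun _ _ => lsum_nonneg fun _ _ =>
    mul_nonneg (ilen_nonneg _) (Real.exp_nonneg _)

lemma WW_le {V : Type*} [MetricSpace V] (X Y : Traj V) (A : Set ℝ) (hA : volume A ≠ ⊤) :
    WW X Y A ≤ ilen A := by
  unfold WW
  have step1 : sum2 X.steps Y.steps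
      (fun q p => ilen (A ∩ stepInt p ∩ stepInt q) * Real.exp (-(dist p.1 q.1)))
      ≤ sum2 X.steps Y.steps (fun q p => ilen ((A ∩ stepInt q) ∩ stepInt p)) := by
    apply sum2_mono; intro q _ p _
    rw [inter_right_comm]
    exact mul_le_of_le_one_right (ilen_nonneg _)
      (Real.exp_le_one_iff.mpr (neg_nonpos.mpr dist_nonneg))
  refine step1.trans ?_
  have e : sum2 X.steps Y.steps (fun q p => ilen ((A ∩ stepInt q) ∩ stepInt p))
      = (X.steps.map (fun q => ilen ((A ∩ stepInt q) ∩ totalInt Y))).sum :=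
    lsum_congr fun q _ => sum_ilen_steps Y (A ∩ stepInt q)
  rw [e]
  calc (X.steps.map (fun q => ilen ((A ∩ stepInt q) ∩ totalInt Y))).sum
      ≤ (X.steps.map (fun q => ilen (A ∩ stepInt q))).sum :=
        lsum_mono fun q _ => ilen_mono inter_subset_left (vfin inter_subset_left hA)
    _ = ilen (A ∩ totalInt X) := sum_ilen_steps X A
    _ ≤ ilen A := ilen_mono inter_subset_left hA

-- appended to full.lean for testing
section Claims
variable {V : Type*} [MetricSpace V]

lemma claimA (P Q T : Traj V) {a b c d : ℝ}
    (hca : c ≤ a) (hab : a ≤ b) (hbd : b ≤ d)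
    (htP : Set.Icc c d ⊆ totalInt P) (hQ : totalInt Q = Set.Icc a b) :
    WW T P (Icc c d) ≤ (ilen (Icc c d) - ilen (Icc a b))
      + WW Q P (Icc c d) + (ilen (Icc a b) - WW Q T (Icc a b)) := by
  set w : Set ℝ := Icc c d with hw
  set sI : Set ℝ := Icc a b with hsI
  have hsub : sI ⊆ w := Icc_subset_Icc hca hbd
  have hwfin : volume w ≠ ⊤ := vfin_Icc (le_refl _)
  have hsubP : sI ⊆ totalInt P := hsub.trans htP
  -- window split
  have hsplit : WW T P w = WW T P (Icc c a) + WW T P sI + WW T P (Icc b d) := by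
    unfold WW
    rw [← sum2_add, ← sum2_add]
    apply sum2_congr; intro k _ i _
    have hJ : ∀ J : Set ℝ, J ∩ stepInt i ∩ stepInt k = J ∩ (stepInt i ∩ stepInt k) :=
      fun J => inter_assoc _ _ _
    rw [hJ w, hJ (Icc c a), hJ sI, hJ (Icc b d), hw, hsI,
      ilen_split3 hca hab hbd (stepInt i ∩ stepInt k)]
    ring
  have h1 : WW T P (Icc c a) ≤ ilen (Icc c a) := WW_le _ _ _ (vfin_Icc (le_refl _))
  have h3 : WW T P (Icc b d) ≤ ilen (Icc b d) := WW_le _ _ _ (vfin_Icc (le_refl _))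
  -- main part
  have h2 : WW T P sI ≤ WW Q P w + (ilen sI - WW Q T sI) := by
    have e1 : WW T P sI = sum3 T.steps P.steps Q.steps
        (fun k i j => ilen (sI ∩ stepInt i ∩ stepInt k ∩ stepInt j) * Real.exp (-(dist i.1 k.1))) := by
      rw [sum3_eq]
      apply sum2_congr; intro k _ i _
      rw [lsum_mul_right]
      congr 1
      rw [sum_ilen_steps Q (sI ∩ stepInt i ∩ stepInt k), hQ,
        inter_eq_left.mpr (inter_subset_left.trans inter_subset_left)]
    have e2 : sum3 T.steps P.steps Q.steps
        (fun k i j => ilen (sI ∩ stepInt i ∩ stepInt k ∩ stepInt j) * Real.exp (-(dist i.1 k.1)))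
        ≤ sum3 T.steps P.steps Q.steps
        (fun k i j => ilen (sI ∩ stepInt i ∩ stepInt k ∩ stepInt j) *
          (Real.exp (-(dist i.1 j.1)) + (1 - Real.exp (-(dist k.1 j.1))))) := by
      apply sum3_mono; intro k _ i _ j _
      apply mul_le_mul_of_nonneg_left ?_ (ilen_nonneg _)
      have := exp_tri (x := dist i.1 j.1) (y := dist k.1 j.1) (z := dist i.1 k.1)
        (by have := dist_triangle i.1 k.1 j.1; linarith) dist_nonneg dist_nonneg
      linarith
    have e3 : sum3 T.steps P.steps Q.steps
        (fun k i j => ilen (sI ∩ stepInt i ∩ stepInt k ∩ stepInt j) *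
          (Real.exp (-(dist i.1 j.1)) + (1 - Real.exp (-(dist k.1 j.1)))))
        = sum3 T.steps P.steps Q.steps
          (fun k i j => ilen (sI ∩ stepInt i ∩ stepInt k ∩ stepInt j) * Real.exp (-(dist i.1 j.1)))
        + sum3 T.steps P.steps Q.steps
          (fun k i j => ilen (sI ∩ stepInt i ∩ stepInt k ∩ stepInt j) * (1 - Real.exp (-(dist k.1 j.1)))) := by
      rw [← sum3_add]
      apply sum3_congr; intro k _ i _ j _; ring
    have e4 : sum3 T.steps P.steps Q.steps
        (fun k i j => ilen (sI ∩ stepInt i ∩ stepInt k ∩ stepInt j) * Real.exp (-(dist i.1 j.1)))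
        ≤ WW Q P w := by
      rw [sum3_swap23, sum3_swap12, sum3_swap23]
      rw [sum3_eq]
      apply sum2_mono; intro j _ i _
      rw [lsum_mul_right]
      apply mul_le_mul_of_nonneg_right ?_ (Real.exp_nonneg _)
      have hre : ∀ k : V × ℤ × ℤ, sI ∩ stepInt i ∩ stepInt k ∩ stepInt j
          = (sI ∩ stepInt i ∩ stepInt j) ∩ stepInt k := fun k =>
        inter_right_comm (sI ∩ stepInt i) (stepInt k) (stepInt j)
      calc (T.steps.map (fun k => ilen (sI ∩ stepInt i ∩ stepInt k ∩ stepInt j))).sum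
          = (T.steps.map (fun k => ilen ((sI ∩ stepInt i ∩ stepInt j) ∩ stepInt k))).sum :=
            lsum_congr fun k _ => by rw [hre k]
        _ = ilen ((sI ∩ stepInt i ∩ stepInt j) ∩ totalInt T) := sum_ilen_steps T _
        _ ≤ ilen (w ∩ stepInt i ∩ stepInt j) := by
            apply ilen_mono
            · intro x hx
              exact ⟨⟨hsub hx.1.1.1, hx.1.1.2⟩, hx.1.2⟩
            · exact vfin_Icc (inter_subset_left.trans inter_subset_left)
    have e5 : sum3 T.steps P.steps Q.steps
        (fun k i j => ilen (sI ∩ stepInt i ∩ stepInt k ∩ stepInt j) * (1 - Real.exp (-(dist k.1 j.1))))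
        ≤ ilen sI - WW Q T sI := by
      rw [sum3_swap23, sum3_eq]
      have e5a : sum2 T.steps Q.steps (fun k j =>
          (P.steps.map (fun i => ilen (sI ∩ stepInt i ∩ stepInt k ∩ stepInt j) *
            (1 - Real.exp (-(dist k.1 j.1))))).sum)
          = sum2 T.steps Q.steps (fun k j =>
          ilen (sI ∩ stepInt k ∩ stepInt j) * (1 - Real.exp (-(dist k.1 j.1)))) := by
        apply sum2_congr; intro k _ j _
        rw [lsum_mul_right]
        congr 1
        have hre : ∀ i : V × ℤ × ℤ, sI ∩ stepInt i ∩ stepInt k ∩ stepInt j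
            = (sI ∩ stepInt k ∩ stepInt j) ∩ stepInt i := by
          intro i; ext x
          simp only [mem_inter_iff]
          tauto
        calc (P.steps.map (fun i => ilen (sI ∩ stepInt i ∩ stepInt k ∩ stepInt j))).sum
            = (P.steps.map (fun i => ilen ((sI ∩ stepInt k ∩ stepInt j) ∩ stepInt i))).sum :=
              lsum_congr fun i _ => by rw [hre i]
          _ = ilen ((sI ∩ stepInt k ∩ stepInt j) ∩ totalInt P) := sum_ilen_steps P _
          _ = ilen (sI ∩ stepInt k ∩ stepInt j) := by
              rw [inter_eq_left.mpr
                ((inter_subset_left.trans inter_subset_left).trans hsubP)]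
      rw [e5a]
      have e5b : sum2 T.steps Q.steps (fun k j =>
          ilen (sI ∩ stepInt k ∩ stepInt j) * (1 - Real.exp (-(dist k.1 j.1))))
          = sum2 T.steps Q.steps (fun k j => ilen (sI ∩ stepInt k ∩ stepInt j))
            - sum2 T.steps Q.steps (fun k j =>
                ilen (sI ∩ stepInt k ∩ stepInt j) * Real.exp (-(dist k.1 j.1))) := by
        rw [← sum2_sub]
        apply sum2_congr; intro k _ j _; ring
      rw [e5b]
      have e5c : sum2 T.steps Q.steps (fun k j =>
          ilen (sI ∩ stepInt k ∩ stepInt j) * Real.exp (-(dist k.1 j.1))) = WW Q T sI := by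
        rw [sum2_comm]; rfl
      rw [e5c]
      have e5d : sum2 T.steps Q.steps (fun k j => ilen (sI ∩ stepInt k ∩ stepInt j)) ≤ ilen sI := by
        have : sum2 T.steps Q.steps (fun k j => ilen ((sI ∩ stepInt k) ∩ stepInt j))
            = (T.steps.map (fun k => ilen ((sI ∩ stepInt k) ∩ totalInt Q))).sum :=
          lsum_congr fun k _ => sum_ilen_steps Q _
        rw [this]
        calc (T.steps.map (fun k => ilen ((sI ∩ stepInt k) ∩ totalInt Q))).sum
            ≤ (T.steps.map (fun k => ilen (sI ∩ stepInt k))).sum :=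
              lsum_mono fun k _ => ilen_mono inter_subset_left
                (vfin_Icc (inter_subset_left.trans hsub))
          _ = ilen (sI ∩ totalInt T) := sum_ilen_steps T sI
          _ ≤ ilen sI := ilen_mono inter_subset_left (vfin_Icc hsub)
      linarith
    calc WW T P sI = _ := e1
      _ ≤ _ := e2
      _ = _ := e3
      _ ≤ WW Q P w + (ilen sI - WW Q T sI) := add_le_add e4 e5
  have hca' : ilen (Icc c a) = a - c := ilen_Icc hca
  have hbd' : ilen (Icc b d) = d - b := ilen_Icc hbd
  have hw' : ilen w = d - c := ilen_Icc (hca.trans (hab.trans hbd))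
  have hsI' : ilen sI = b - a := ilen_Icc hab
  linarith [hsplit, h1, h2, h3]

end Claims

section ClaimsB
variable {V : Type*} [MetricSpace V]

lemma claimB (P Q T : Traj V) {a b c d : ℝ}
    (hca : c ≤ a) (hab : a ≤ b) (hbd : b ≤ d)
    (htP : Set.Icc c d ⊆ totalInt P) (hQ : totalInt Q = Set.Icc a b) :
    WW Q P (Icc c d) ≤ ilen (Icc a b) + WW T P (Icc c d) - WW Q T (Icc a b) := by
  set w : Set ℝ := Icc c d with hw
  set sI : Set ℝ := Icc a b with hsI
  have hsub : sI ⊆ w := Icc_subset_Icc hca hbd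
  have hIT : MeasurableSet (totalInt T) := measurableSet_totalInt T
  -- split by I(T)
  have hsplit : WW Q P w
      = sum2 Q.steps P.steps (fun j i =>
          ilen ((w ∩ stepInt i ∩ stepInt j) ∩ totalInt T) * Real.exp (-(dist i.1 j.1)))
      + sum2 Q.steps P.steps (fun j i =>
          ilen ((w ∩ stepInt i ∩ stepInt j) \ totalInt T) * Real.exp (-(dist i.1 j.1))) := by
    unfold WW
    rw [← sum2_add]
    apply sum2_congr; intro j _ i _
    rw [ilen_inter_add_diff (w ∩ stepInt i ∩ stepInt j) hIT
      (vfin_Icc (inter_subset_left.trans inter_subset_left))]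
    ring
  -- diff part
  have hdiff : sum2 Q.steps P.steps (fun j i =>
      ilen ((w ∩ stepInt i ∩ stepInt j) \ totalInt T) * Real.exp (-(dist i.1 j.1)))
      ≤ ilen sI - ilen (sI ∩ totalInt T) := by
    have step1 : sum2 Q.steps P.steps (fun j i =>
        ilen ((w ∩ stepInt i ∩ stepInt j) \ totalInt T) * Real.exp (-(dist i.1 j.1)))
        ≤ sum2 Q.steps P.steps (fun j i =>
          ilen ((((w \ totalInt T) ∩ stepInt j)) ∩ stepInt i)) := by
      apply sum2_mono; intro j _ i _
      have hset : (w ∩ stepInt i ∩ stepInt j) \ totalInt T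
          = ((w \ totalInt T) ∩ stepInt j) ∩ stepInt i := by
        ext x; simp only [mem_inter_iff, mem_diff]; tauto
      rw [hset]
      exact mul_le_of_le_one_right (ilen_nonneg _)
        (Real.exp_le_one_iff.mpr (neg_nonpos.mpr dist_nonneg))
    refine step1.trans ?_
    have step2 : sum2 Q.steps P.steps (fun j i =>
        ilen ((((w \ totalInt T) ∩ stepInt j)) ∩ stepInt i))
        = (Q.steps.map (fun j => ilen (((w \ totalInt T) ∩ stepInt j) ∩ totalInt P))).sum :=
      lsum_congr fun j _ => sum_ilen_steps P _
    rw [step2]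
    have step3 : (Q.steps.map (fun j => ilen (((w \ totalInt T) ∩ stepInt j) ∩ totalInt P))).sum
        = (Q.steps.map (fun j => ilen ((w \ totalInt T) ∩ stepInt j))).sum := by
      apply lsum_congr; intro j _
      congr 1
      rw [inter_eq_left.mpr ((inter_subset_left.trans diff_subset).trans htP)]
    rw [step3, sum_ilen_steps Q (w \ totalInt T), hQ]
    have hset2 : (w \ totalInt T) ∩ sI = sI \ totalInt T := by
      ext x; simp only [mem_inter_iff, mem_diff]
      exact ⟨fun h => ⟨h.2, h.1.2⟩, fun h => ⟨⟨hsub h.1, h.2⟩, h.1⟩⟩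
    rw [hset2]
    have := ilen_inter_add_diff sI hIT (vfin_Icc hsub)
    linarith
  -- inter part
  have hinter : sum2 Q.steps P.steps (fun j i =>
      ilen ((w ∩ stepInt i ∩ stepInt j) ∩ totalInt T) * Real.exp (-(dist i.1 j.1)))
      ≤ WW T P w + (ilen (sI ∩ totalInt T) - WW Q T sI) := by
    have e1 : sum2 Q.steps P.steps (fun j i =>
        ilen ((w ∩ stepInt i ∩ stepInt j) ∩ totalInt T) * Real.exp (-(dist i.1 j.1)))
        = sum3 Q.steps P.steps T.steps (fun j i k =>
          ilen ((w ∩ stepInt i ∩ stepInt j) ∩ stepInt k) * Real.exp (-(dist i.1 j.1))) := by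
      rw [sum3_eq]
      apply sum2_congr; intro j _ i _
      rw [lsum_mul_right]
      congr 1
      rw [sum_ilen_steps T (w ∩ stepInt i ∩ stepInt j)]
    have e2 : sum3 Q.steps P.steps T.steps (fun j i k =>
        ilen ((w ∩ stepInt i ∩ stepInt j) ∩ stepInt k) * Real.exp (-(dist i.1 j.1)))
        ≤ sum3 Q.steps P.steps T.steps (fun j i k =>
          ilen ((w ∩ stepInt i ∩ stepInt j) ∩ stepInt k) *
            (Real.exp (-(dist i.1 k.1)) + (1 - Real.exp (-(dist k.1 j.1))))) := by
      apply sum3_mono; intro j _ i _ k _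
      apply mul_le_mul_of_nonneg_left ?_ (ilen_nonneg _)
      have := exp_tri (x := dist i.1 k.1) (y := dist k.1 j.1) (z := dist i.1 j.1)
        (by have h1 := dist_triangle i.1 j.1 k.1; have h2 := dist_comm j.1 k.1; linarith)
        dist_nonneg dist_nonneg
      linarith
    have e3 : sum3 Q.steps P.steps T.steps (fun j i k =>
        ilen ((w ∩ stepInt i ∩ stepInt j) ∩ stepInt k) *
          (Real.exp (-(dist i.1 k.1)) + (1 - Real.exp (-(dist k.1 j.1)))))
        = sum3 Q.steps P.steps T.steps (fun j i k =>
            ilen ((w ∩ stepInt i ∩ stepInt j) ∩ stepInt k) * Real.exp (-(dist i.1 k.1)))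
        + sum3 Q.steps P.steps T.steps (fun j i k =>
            ilen ((w ∩ stepInt i ∩ stepInt j) ∩ stepInt k) * (1 - Real.exp (-(dist k.1 j.1)))) := by
      rw [← sum3_add]
      apply sum3_congr; intro j _ i _ k _; ring
    have e4 : sum3 Q.steps P.steps T.steps (fun j i k =>
        ilen ((w ∩ stepInt i ∩ stepInt j) ∩ stepInt k) * Real.exp (-(dist i.1 k.1)))
        ≤ WW T P w := by
      rw [sum3_swap12, sum3_swap23, sum3_swap12, sum3_eq]
      apply sum2_mono; intro k _ i _
      rw [lsum_mul_right]
      apply mul_le_mul_of_nonneg_right ?_ (Real.exp_nonneg _)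
      have hre : ∀ j : V × ℤ × ℤ, (w ∩ stepInt i ∩ stepInt j) ∩ stepInt k
          = (w ∩ stepInt i ∩ stepInt k) ∩ stepInt j := by
        intro j; ext x; simp only [mem_inter_iff]; tauto
      calc (Q.steps.map (fun j => ilen ((w ∩ stepInt i ∩ stepInt j) ∩ stepInt k))).sum
          = (Q.steps.map (fun j => ilen ((w ∩ stepInt i ∩ stepInt k) ∩ stepInt j))).sum :=
            lsum_congr fun j _ => by rw [hre j]
        _ = ilen ((w ∩ stepInt i ∩ stepInt k) ∩ totalInt Q) := sum_ilen_steps Q _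
        _ ≤ ilen (w ∩ stepInt i ∩ stepInt k) := ilen_mono inter_subset_left
            (vfin_Icc (inter_subset_left.trans inter_subset_left))
    have e5 : sum3 Q.steps P.steps T.steps (fun j i k =>
        ilen ((w ∩ stepInt i ∩ stepInt j) ∩ stepInt k) * (1 - Real.exp (-(dist k.1 j.1))))
        ≤ ilen (sI ∩ totalInt T) - WW Q T sI := by
      rw [sum3_swap23, sum3_eq]
      have e5a : sum2 Q.steps T.steps (fun j k =>
          (P.steps.map (fun i => ilen ((w ∩ stepInt i ∩ stepInt j) ∩ stepInt k) *
            (1 - Real.exp (-(dist k.1 j.1))))).sum)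
          = sum2 Q.steps T.steps (fun j k =>
            ilen (w ∩ stepInt j ∩ stepInt k) * (1 - Real.exp (-(dist k.1 j.1)))) := by
        apply sum2_congr; intro j _ k _
        rw [lsum_mul_right]
        congr 1
        have hre : ∀ i : V × ℤ × ℤ, (w ∩ stepInt i ∩ stepInt j) ∩ stepInt k
            = (w ∩ stepInt j ∩ stepInt k) ∩ stepInt i := by
          intro i; ext x; simp only [mem_inter_iff]; tauto
        calc (P.steps.map (fun i => ilen ((w ∩ stepInt i ∩ stepInt j) ∩ stepInt k))).sum
            = (P.steps.map (fun i => ilen ((w ∩ stepInt j ∩ stepInt k) ∩ stepInt i))).sum :=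
              lsum_congr fun i _ => by rw [hre i]
          _ = ilen ((w ∩ stepInt j ∩ stepInt k) ∩ totalInt P) := sum_ilen_steps P _
          _ = ilen (w ∩ stepInt j ∩ stepInt k) := by
              rw [inter_eq_left.mpr
                ((inter_subset_left.trans inter_subset_left).trans htP)]
      rw [e5a]
      have e5b : sum2 Q.steps T.steps (fun j k =>
          ilen (w ∩ stepInt j ∩ stepInt k) * (1 - Real.exp (-(dist k.1 j.1))))
          ≤ sum2 Q.steps T.steps (fun j k =>
            ilen (w ∩ stepInt j ∩ stepInt k)
            - ilen (sI ∩ stepInt k ∩ stepInt j) * Real.exp (-(dist k.1 j.1))) := by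
        apply sum2_mono; intro j _ k _
        have hmono : ilen (sI ∩ stepInt k ∩ stepInt j) ≤ ilen (w ∩ stepInt j ∩ stepInt k) := by
          apply ilen_mono
          · intro x hx; exact ⟨⟨hsub hx.1.1, hx.2⟩, hx.1.2⟩
          · exact vfin_Icc (inter_subset_left.trans inter_subset_left)
        have he0 := Real.exp_nonneg (-(dist k.1 j.1))
        have he1 : Real.exp (-(dist k.1 j.1)) ≤ 1 :=
          Real.exp_le_one_iff.mpr (neg_nonpos.mpr dist_nonneg)
        nlinarith [ilen_nonneg (w ∩ stepInt j ∩ stepInt k)]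
      refine e5b.trans ?_
      rw [sum2_sub]
      have e5c : sum2 Q.steps T.steps (fun j k =>
          ilen (sI ∩ stepInt k ∩ stepInt j) * Real.exp (-(dist k.1 j.1))) = WW Q T sI := rfl
      rw [e5c]
      have e5d : sum2 Q.steps T.steps (fun j k => ilen (w ∩ stepInt j ∩ stepInt k))
          ≤ ilen (sI ∩ totalInt T) := by
        have : sum2 Q.steps T.steps (fun j k => ilen ((w ∩ stepInt j) ∩ stepInt k))
            = (Q.steps.map (fun j => ilen ((w ∩ stepInt j) ∩ totalInt T))).sum :=
          lsum_congr fun j _ => sum_ilen_steps T _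
        rw [this]
        have hre : ∀ j : V × ℤ × ℤ, (w ∩ stepInt j) ∩ totalInt T
            = ((w ∩ totalInt T) ∩ stepInt j) := by
          intro j; ext x; simp only [mem_inter_iff]; tauto
        calc (Q.steps.map (fun j => ilen ((w ∩ stepInt j) ∩ totalInt T))).sum
            = (Q.steps.map (fun j => ilen ((w ∩ totalInt T) ∩ stepInt j))).sum :=
              lsum_congr fun j _ => by rw [hre j]
          _ = ilen ((w ∩ totalInt T) ∩ totalInt Q) := sum_ilen_steps Q _
          _ = ilen (sI ∩ totalInt T) := by
              rw [hQ]
              congr 1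
              ext x; simp only [mem_inter_iff]
              exact ⟨fun h => ⟨h.2, h.1.2⟩, fun h => ⟨⟨hsub h.1, h.2⟩, h.1⟩⟩
          _ ≤ ilen (sI ∩ totalInt T) := le_rfl
      linarith
    calc sum2 Q.steps P.steps (fun j i =>
        ilen ((w ∩ stepInt i ∩ stepInt j) ∩ totalInt T) * Real.exp (-(dist i.1 j.1)))
        = _ := e1
      _ ≤ _ := e2
      _ = _ := e3
      _ ≤ WW T P w + (ilen (sI ∩ totalInt T) - WW Q T sI) := add_le_add e4 e5
  linarith [hsplit, hdiff, hinter]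

end ClaimsB

/-- Soundness of the pivot-based spatial filter: Let `P`, `Q` and `T` be
trajectories in `V`, and `s = [a,b]`, `t = [c,d]` time intervals with `|s| > 0`, `|t| > 0`,
`t ⊆ I(P)` and `I(Q) = s ⊆ t`. Then
`|Dist(Q,P,t) − Dist(T,P,t)| ≤ 1 − |s|/|t| + (|s|/|t|) · Dist(Q,T,s)`; in particular, for
any threshold `r ≥ 0`, if `|Dist(Q,P,t) − Dist(T,P,t)| > 1 − |s|/|t| + (|s|/|t|) · r`, then
`Dist(Q,T,s) > r`. -/
theorem pivot_filter_sound {V : Type*} [MetricSpace V] (P Q T : Traj V)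
    (a b c d : ℤ) (hab : a < b) (hcd : c < d)
    (htP : Set.Icc (c : ℝ) d ⊆ totalInt P)
    (hQ : totalInt Q = Set.Icc (a : ℝ) b)
    (hst : Set.Icc (a : ℝ) b ⊆ Set.Icc (c : ℝ) d) :
    |TrajDist Q P (Set.Icc (c : ℝ) d) - TrajDist T P (Set.Icc (c : ℝ) d)| ≤
        1 - ilen (Set.Icc (a : ℝ) b) / ilen (Set.Icc (c : ℝ) d) +
          (ilen (Set.Icc (a : ℝ) b) / ilen (Set.Icc (c : ℝ) d)) *
            TrajDist Q T (Set.Icc (a : ℝ) b) ∧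
      ∀ r : ℝ, 0 ≤ r →
        1 - ilen (Set.Icc (a : ℝ) b) / ilen (Set.Icc (c : ℝ) d) +
            (ilen (Set.Icc (a : ℝ) b) / ilen (Set.Icc (c : ℝ) d)) * r <
          |TrajDist Q P (Set.Icc (c : ℝ) d) - TrajDist T P (Set.Icc (c : ℝ) d)| →
        r < TrajDist Q T (Set.Icc (a : ℝ) b) := by
  have hab' : (a : ℝ) ≤ b := by exact_mod_cast hab.le
  have hab'' : (a : ℝ) < b := by exact_mod_cast hab
  have hcd' : (c : ℝ) < d := by exact_mod_cast hcd
  have hca : (c : ℝ) ≤ a := (hst (left_mem_Icc.mpr hab')).1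
  have hbd : (b : ℝ) ≤ d := (hst (right_mem_Icc.mpr hab')).2
  set w : Set ℝ := Set.Icc (c : ℝ) d with hwdef
  set sI : Set ℝ := Set.Icc (a : ℝ) b with hsIdef
  have hσ : ilen sI = (b : ℝ) - a := ilen_Icc hab'
  have hτ : ilen w = (d : ℝ) - c := ilen_Icc hcd'.le
  have hσpos : 0 < ilen sI := by rw [hσ]; linarith
  have hτpos : 0 < ilen w := by rw [hτ]; linarith
  have hστ : ilen sI ≤ ilen w := by rw [hσ, hτ]; linarith
  have hA := claimA P Q T hca hab' hbd htP hQ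
  have hB := claimB P Q T hca hab' hbd htP hQ
  have hWQT0 := WW_nonneg Q T sI
  have key : |WW T P w - WW Q P w| ≤ ilen w - WW Q T sI := by
    rw [abs_le]
    constructor <;> linarith
  have ediff : TrajDist Q P w - TrajDist T P w = (WW T P w - WW Q P w) / ilen w := by
    unfold TrajDist
    rw [Sim_eq, Sim_eq]
    field_simp
    ring
  have eD3 : TrajDist Q T sI = 1 - WW Q T sI / ilen sI := by
    unfold TrajDist
    rw [Sim_eq]
    ring
  have main : |TrajDist Q P w - TrajDist T P w| ≤
      1 - ilen sI / ilen w + (ilen sI / ilen w) * TrajDist Q T sI := by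
    rw [ediff, abs_div, abs_of_pos hτpos, div_le_iff₀ hτpos, eD3]
    have hrw : (1 - ilen sI / ilen w + ilen sI / ilen w * (1 - WW Q T sI / ilen sI)) * ilen w
        = ilen w - WW Q T sI := by
      field_simp
      ring
    rw [hrw]
    exact key
  refine ⟨main, ?_⟩
  intro r hr hlt
  have h2 := lt_of_lt_of_le hlt main
  have hlampos : 0 < ilen sI / ilen w := div_pos hσpos hτpos
  have h3 : (ilen sI / ilen w) * r < (ilen sI / ilen w) * TrajDist Q T sI := by linarith
  exact lt_of_mul_lt_mul_left h3 hlampos.le
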